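/- Let B be a smooth manifold, let C ⊆ B be a closed subset, and let λ : B → ℝ be a smooth function with −1 < λ(p) ≤ 1 for all p. Then there exists a smooth function v : B × (−1,1) → [0,∞) such that, writing (S(p,x), T(p,x)) for the domain of the maximal solution γ of γ'(t) = v(p, γ(t)), γ(0) = x, valued in (−1,1): (i) T(p,x) ≤ 1 if and only if p ∈ C and λ(p) ≤ x < 1; and (ii) S(p,x) = −∞ for all (p,x) ∈ B × (−1,1). -/

import Mathlib

open Set Manifold Function Filter Polynomial Topology

noncomputable section

namespace NullFieldAux

/-- The derivative of `expNegInvGlue`. -/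
def Ed (y : ℝ) : ℝ := (y ^ 2)⁻¹ * expNegInvGlue y

lemma hasDerivAt_E (y : ℝ) : HasDerivAt expNegInvGlue (Ed y) y := by
  have h := expNegInvGlue.hasDerivAt_polynomial_eval_inv_mul (1 : ℝ[X]) y
  simp only [Polynomial.eval_one, one_mul, derivative_one, sub_zero, mul_one,
    Polynomial.eval_pow, Polynomial.eval_X] at h
  simpa [Ed, inv_pow] using h

lemma Ed_nonneg (y : ℝ) : 0 ≤ Ed y :=
  mul_nonneg (inv_nonneg.2 (sq_nonneg _)) (expNegInvGlue.nonneg _)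

lemma contDiff_Ed : ContDiff ℝ (⊤ : ℕ∞) Ed := by
  have h := expNegInvGlue.contDiff_polynomial_eval_inv_mul (n := ⊤) (X ^ 2 : ℝ[X])
  simp only [Polynomial.eval_pow, Polynomial.eval_X] at h
  exact (by simpa [inv_pow] using h : ContDiff ℝ (⊤ : ℕ∞) fun x : ℝ => (x ^ 2)⁻¹ * expNegInvGlue x)

lemma E_le_one (y : ℝ) : expNegInvGlue y ≤ 1 := by
  unfold expNegInvGlue
  split
  · norm_num
  · rw [Real.exp_le_one_iff]
    rename_i h
    push_neg at h
    simp [inv_nonneg.2 h.le]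

/-- The "integrating factor". -/
def Gm (a c x : ℝ) : ℝ :=
  (Real.log 2)⁻¹ * (-Real.log (2 - a - x)) - expNegInvGlue (a - x) * (1 + x)⁻¹
    + c * (1 - x)⁻¹

/-- Derivative of `Gm` in `x`. -/
def Gd (a c x : ℝ) : ℝ :=
  (Real.log 2)⁻¹ * (2 - a - x)⁻¹
    + (Ed (a - x) * (1 + x)⁻¹ + expNegInvGlue (a - x) * ((1 + x) ^ 2)⁻¹)
    + c * ((1 - x) ^ 2)⁻¹

lemma log2_pos : (0:ℝ) < Real.log 2 := Real.log_pos (by norm_num)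

lemma hasDerivAt_Gm {a : ℝ} (c : ℝ) (ha : a ≤ 1) {x : ℝ} (hx : x ∈ Ioo (-1:ℝ) 1) :
    HasDerivAt (fun y => Gm a c y) (Gd a c x) x := by
  obtain ⟨hx1, hx2⟩ := hx
  have h2ax : (0:ℝ) < 2 - a - x := by linarith
  have h1px : (0:ℝ) < 1 + x := by linarith
  have h1mx : (0:ℝ) < 1 - x := by linarith
  have hlin : HasDerivAt (fun y : ℝ => 2 - a - y) (-1) x := by
    simpa using (hasDerivAt_id x).const_sub (2 - a)
  have hlog : HasDerivAt (fun y => Real.log (2 - a - y)) ((2 - a - x)⁻¹ * (-1)) x :=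
    (Real.hasDerivAt_log h2ax.ne').comp x hlin
  have t1 : HasDerivAt (fun y => (Real.log 2)⁻¹ * (-Real.log (2 - a - y)))
      ((Real.log 2)⁻¹ * (-((2 - a - x)⁻¹ * (-1)))) x := hlog.neg.const_mul _
  have hE : HasDerivAt (fun y => expNegInvGlue (a - y)) (Ed (a - x) * (-1)) x := by
    have := (hasDerivAt_E (a - x)).comp x (by simpa using (hasDerivAt_id x).const_sub a)
    exact (by simpa using this : HasDerivAt (expNegInvGlue ∘ HSub.hSub a) (-Ed (a - x)) x).congr_deriv (by ring)
  have hinv1 : HasDerivAt (fun y : ℝ => (1 + y)⁻¹) (-1 / (1 + x) ^ 2) x := by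
    have h := ((hasDerivAt_id x).const_add 1).inv h1px.ne'
    exact (by simpa using h : HasDerivAt (fun y : ℝ => 1 + y)⁻¹ (-1 / (1 + x) ^ 2) x)
  have t2 : HasDerivAt (fun y => expNegInvGlue (a - y) * (1 + y)⁻¹)
      (Ed (a - x) * (-1) * (1 + x)⁻¹ + expNegInvGlue (a - x) * (-1 / (1 + x) ^ 2)) x :=
    hE.mul hinv1
  have hinv2 : HasDerivAt (fun y : ℝ => (1 - y)⁻¹) (-(-1) / (1 - x) ^ 2) x := by
    have h := ((hasDerivAt_id x).const_sub 1).inv h1mx.ne'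
    exact (by simpa using h : HasDerivAt (fun y : ℝ => 1 - y)⁻¹ (-(-1) / (1 - x) ^ 2) x)
  have t3 : HasDerivAt (fun y : ℝ => c * (1 - y)⁻¹) (c * (-(-1) / (1 - x) ^ 2)) x :=
    hinv2.const_mul c
  have total := (t1.sub t2).add t3
  have heq : (Real.log 2)⁻¹ * (-((2 - a - x)⁻¹ * (-1)))
      - (Ed (a - x) * (-1) * (1 + x)⁻¹ + expNegInvGlue (a - x) * (-1 / (1 + x) ^ 2))
      + c * (-(-1) / (1 - x) ^ 2) = Gd a c x := by
    unfold Gd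
    field_simp
    ring
  rw [heq] at total
  exact total.congr_deriv rfl

lemma Gd_pos {a c x : ℝ} (ha : a ≤ 1) (hc : 0 ≤ c) (hx : x ∈ Ioo (-1:ℝ) 1) :
    0 < Gd a c x := by
  obtain ⟨hx1, hx2⟩ := hx
  have h2ax : (0:ℝ) < 2 - a - x := by linarith
  have h1px : (0:ℝ) < 1 + x := by linarith
  have h1mx : (0:ℝ) < 1 - x := by linarith
  have t1 : 0 < (Real.log 2)⁻¹ * (2 - a - x)⁻¹ :=
    mul_pos (inv_pos.2 log2_pos) (inv_pos.2 h2ax)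
  have t2 : 0 ≤ Ed (a - x) * (1 + x)⁻¹ + expNegInvGlue (a - x) * ((1 + x) ^ 2)⁻¹ := by
    have := Ed_nonneg (a - x)
    have := expNegInvGlue.nonneg (a - x)
    positivity
  have t3 : 0 ≤ c * ((1 - x) ^ 2)⁻¹ := by positivity
  unfold Gd
  linarith

lemma Gm_strictMonoOn {a : ℝ} (c : ℝ) (ha : a ≤ 1) (hc : 0 ≤ c) :
    StrictMonoOn (fun y => Gm a c y) (Ioo (-1:ℝ) 1) := by
  apply strictMonoOn_of_hasDerivWithinAt_pos (convex_Ioo _ _)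
    (f' := fun y => Gd a c y)
  · exact fun y hy => (hasDerivAt_Gm c ha hy).continuousAt.continuousWithinAt
  · intro y hy
    rw [interior_Ioo] at hy
    exact (hasDerivAt_Gm c ha hy).hasDerivWithinAt
  · intro y hy
    rw [interior_Ioo] at hy
    exact Gd_pos ha hc hy

/-- Existence of integral curves: given room below and above in `Gm`-values, there is a
solution of `γ' = (Gd a c γ)⁻¹` on `[α, β]` with `γ 0 = x`. -/
lemma flow_exists {a : ℝ} (c : ℝ) (ha : a ≤ 1) (hc : 0 ≤ c) {x α β : ℝ}
    (hx : x ∈ Ioo (-1:ℝ) 1) (hα : α ≤ 0) (hβ : 0 ≤ β)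
    (hu : ∃ u ∈ Ioo (-1:ℝ) 1, Gm a c u < Gm a c x + α)
    (hw : ∃ w ∈ Ioo (-1:ℝ) 1, Gm a c x + β < Gm a c w) :
    ∃ γ : ℝ → ℝ, γ 0 = x ∧ ∀ t ∈ Icc α β, γ t ∈ Ioo (-1:ℝ) 1 ∧
      HasDerivAt γ ((Gd a c (γ t))⁻¹) t := by
  obtain ⟨u, huI, huv⟩ := hu
  obtain ⟨w, hwI, hwv⟩ := hw
  have mono := Gm_strictMonoOn c ha hc
  have hux : u < x := by
    by_contra h
    push_neg at h
    have := mono.monotoneOn hx huI h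
    linarith
  have hxw : x < w := by
    by_contra h
    push_neg at h
    have := mono.monotoneOn hwI hx h
    linarith
  have hIccsub : Icc u w ⊆ Ioo (-1:ℝ) 1 := fun y hy =>
    ⟨lt_of_lt_of_le huI.1 hy.1, lt_of_le_of_lt hy.2 hwI.2⟩
  have hIoosub : Ioo u w ⊆ Ioo (-1:ℝ) 1 := (Ioo_subset_Icc_self).trans hIccsub
  have hcont : ContinuousOn (fun y => Gm a c y) (Icc u w) := fun y hy =>
    (hasDerivAt_Gm c ha (hIccsub hy)).continuousAt.continuousWithinAt
  have key : ∀ z ∈ Ioo (Gm a c u) (Gm a c w), ∃ y ∈ Ioo u w, Gm a c y = z := by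
    intro z hz
    have := intermediate_value_Ioo (le_of_lt (hux.trans hxw)) hcont
    obtain ⟨y, hy, hy2⟩ := this hz
    exact ⟨y, hy, hy2⟩
  set g : ℝ → ℝ := invFunOn (fun y => Gm a c y) (Ioo u w) with hg_def
  set γ : ℝ → ℝ := fun t => g (Gm a c x + t) with hγ_def
  have hInj : InjOn (fun y => Gm a c y) (Ioo u w) := mono.injOn.mono hIoosub
  have hmem : ∀ t ∈ Icc α β, Gm a c x + t ∈ Ioo (Gm a c u) (Gm a c w) := by
    intro t ht
    exact ⟨by linarith [ht.1], by linarith [ht.2]⟩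
  have hγS : ∀ t ∈ Icc α β, γ t ∈ Ioo u w ∧ Gm a c (γ t) = Gm a c x + t := by
    intro t ht
    obtain ⟨y, hy, hy2⟩ := key _ (hmem t ht)
    exact ⟨invFunOn_mem ⟨y, hy, hy2⟩, invFunOn_eq ⟨y, hy, hy2⟩⟩
  have hxS : x ∈ Ioo u w := ⟨hux, hxw⟩
  have hγ0 : γ 0 = x := by
    have h0 : (0:ℝ) ∈ Icc α β := ⟨hα, hβ⟩
    obtain ⟨hmem0, heq0⟩ := hγS 0 h0
    apply hInj hmem0 hxS
    simp only at heq0 ⊢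
    rw [heq0, add_zero]
  refine ⟨γ, hγ0, fun t ht => ?_⟩
  obtain ⟨htS, htval⟩ := hγS t ht
  refine ⟨hIoosub htS, ?_⟩
  -- derivative via local inverse
  set x₀ := γ t with hx₀
  have hx₀Ioo : x₀ ∈ Ioo (-1:ℝ) 1 := hIoosub htS
  have hGd_pos : 0 < Gd a c x₀ := Gd_pos ha hc hx₀Ioo
  have hgcont : ContinuousAt g (Gm a c x + t) := by
    rw [Metric.continuousAt_iff]
    intro ε hε
    have hx₀u : u < x₀ := htS.1
    have hx₀w : x₀ < w := htS.2
    set ε' := min ε (min ((x₀ - u) / 2) ((w - x₀) / 2)) with hε'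
    have hε'pos : 0 < ε' := by
      apply lt_min hε
      apply lt_min <;> linarith
    have hp1 : x₀ - ε' ∈ Ioo u w := by
      constructor
      · have : ε' ≤ (x₀ - u) / 2 := (min_le_right _ _).trans (min_le_left _ _)
        linarith
      · linarith
    have hp2 : x₀ + ε' ∈ Ioo u w := by
      constructor
      · linarith
      · have : ε' ≤ (w - x₀) / 2 := (min_le_right _ _).trans (min_le_right _ _)
        linarith
    have hlt1 : Gm a c (x₀ - ε') < Gm a c x₀ := by
      have := mono (hIoosub hp1) hx₀Ioo (by linarith)
      simpa using this
    have hlt2 : Gm a c x₀ < Gm a c (x₀ + ε') := by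
      have := mono hx₀Ioo (hIoosub hp2) (by linarith)
      simpa using this
    have hVnhds : Ioo (Gm a c (x₀ - ε')) (Gm a c (x₀ + ε')) ∈ 𝓝 (Gm a c x + t) := by
      rw [← htval]
      exact Ioo_mem_nhds hlt1 hlt2
    rw [Metric.mem_nhds_iff] at hVnhds
    obtain ⟨δ, hδ, hδsub⟩ := hVnhds
    refine ⟨δ, hδ, fun {z} hz => ?_⟩
    have hzV : z ∈ Ioo (Gm a c (x₀ - ε')) (Gm a c (x₀ + ε')) := hδsub hz
    have hzuw : z ∈ Ioo (Gm a c u) (Gm a c w) := by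
      constructor
      · exact lt_trans (mono huI (hIoosub hp1) hp1.1) hzV.1
      · exact lt_trans hzV.2 (mono (hIoosub hp2) hwI hp2.2)
    obtain ⟨y, hy, hy2⟩ := key z hzuw
    have hgz_mem : g z ∈ Ioo u w := invFunOn_mem ⟨y, hy, hy2⟩
    have hgz_val : Gm a c (g z) = z := invFunOn_eq ⟨y, hy, hy2⟩
    have hlow : x₀ - ε' < g z := by
      by_contra h
      push_neg at h
      have := mono.monotoneOn (hIoosub hgz_mem) (hIoosub hp1) h
      rw [hgz_val] at this
      exact absurd hzV.1 (not_lt.2 this)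
    have hhigh : g z < x₀ + ε' := by
      by_contra h
      push_neg at h
      have := mono.monotoneOn (hIoosub hp2) (hIoosub hgz_mem) h
      rw [hgz_val] at this
      exact absurd hzV.2 (not_lt.2 this)
    have hgt : g (Gm a c x + t) = x₀ := rfl
    rw [Real.dist_eq, hgt]
    have : |g z - x₀| < ε' := abs_sub_lt_iff.2 ⟨by linarith, by linarith⟩
    exact lt_of_lt_of_le this (min_le_left _ _)
  have hfg : ∀ᶠ z in 𝓝 (Gm a c x + t), Gm a c (g z) = z := by
    filter_upwards [Ioo_mem_nhds (hmem t ht).1 (hmem t ht).2] with z hz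
    obtain ⟨y, hy, hy2⟩ := key z hz
    exact invFunOn_eq ⟨y, hy, hy2⟩
  have hf : HasDerivAt (fun y => Gm a c y) (Gd a c x₀) (g (Gm a c x + t)) :=
    hasDerivAt_Gm c ha hx₀Ioo
  have hD : HasDerivAt g ((Gd a c x₀)⁻¹) (Gm a c x + t) :=
    HasDerivAt.of_local_left_inverse hgcont hf hGd_pos.ne' hfg
  have haff : HasDerivAt (fun s : ℝ => Gm a c x + s) 1 t := by
    simpa using (hasDerivAt_id t).const_add (Gm a c x)
  have := hD.comp t haff
  exact (by simpa using this : HasDerivAt (g ∘ HAdd.hAdd (Gm a c x)) (Gd a c x₀)⁻¹ t)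

/-- Non-existence: if `p ∈ C` (`c = 0`) and `l p ≤ x`, no solution on `[0,1]`. -/
lemma no_solution {a x : ℝ} (ha1 : -1 < a) (hax : a ≤ x) (hx : x ∈ Ioo (-1:ℝ) 1)
    {γ : ℝ → ℝ} (hγ0 : γ 0 = x)
    (hγ : ∀ t ∈ Icc (0:ℝ) 1, γ t ∈ Ioo (-1:ℝ) 1 ∧ HasDerivAt γ ((Gd a 0 (γ t))⁻¹) t) :
    False := by
  have ha2 : a < 1 := lt_of_le_of_lt hax hx.2
  have ha2' : a ≤ 1 := ha2.le
  have hKpos : 0 < (Real.log 2)⁻¹ := inv_pos.2 log2_pos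
  set h : ℝ → ℝ := fun t => Gm a 0 (γ t) with hh
  have hcont : ContinuousOn h (Icc 0 1) := by
    intro t ht
    have h1 := hγ t ht
    exact ((hasDerivAt_Gm 0 ha2' h1.1).comp t h1.2).continuousAt.continuousWithinAt
  have hder : ∀ t ∈ Ioo (0:ℝ) 1, HasDerivAt h 1 t := by
    intro t ht
    have h1 := hγ t (Ioo_subset_Icc_self ht)
    have := (hasDerivAt_Gm 0 ha2' h1.1).comp t h1.2
    have hpos := Gd_pos ha2' le_rfl h1.1
    rw [mul_inv_cancel₀ hpos.ne'] at this
    exact this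
  obtain ⟨s, _, hs⟩ := exists_hasDerivAt_eq_slope h (fun _ => 1) one_pos hcont hder
  have hstep : h 1 = h 0 + 1 := by
    have hs' : (1:ℝ) = (h 1 - h 0) / (1 - 0) := hs
    field_simp at hs'
    linarith
  have haIoo : a ∈ Ioo (-1:ℝ) 1 := ⟨ha1, ha2⟩
  have mono := Gm_strictMonoOn (a := a) 0 ha2' le_rfl
  have h0val : h 0 = Gm a 0 x := by
    show Gm a 0 (γ 0) = Gm a 0 x
    rw [hγ0]
  have hGmge : Gm a 0 a ≤ Gm a 0 x := by
    have := mono.monotoneOn haIoo hx hax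
    simpa using this
  have hEa : expNegInvGlue (a - a) = 0 := by
    rw [sub_self]
    exact expNegInvGlue.zero
  have hGma : Gm a 0 a = (Real.log 2)⁻¹ * (-Real.log (2 - 2 * a)) := by
    unfold Gm
    rw [hEa]
    ring_nf
  set y1 := γ 1 with hy1
  have hy1I : y1 ∈ Ioo (-1:ℝ) 1 := (hγ 1 ⟨zero_le_one, le_rfl⟩).1
  have h1le : h 1 ≤ (Real.log 2)⁻¹ * (-Real.log (2 - a - y1)) := by
    have hE1 : 0 ≤ expNegInvGlue (a - y1) := expNegInvGlue.nonneg (a - y1)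
    have hE2 : (0:ℝ) ≤ (1 + y1)⁻¹ := inv_nonneg.2 (by linarith [hy1I.1])
    have hE : 0 ≤ expNegInvGlue (a - y1) * (1 + y1)⁻¹ := mul_nonneg hE1 hE2
    have heq : h 1 = (Real.log 2)⁻¹ * (-Real.log (2 - a - y1))
        - expNegInvGlue (a - y1) * (1 + y1)⁻¹ := by
      show Gm a 0 y1 = _
      unfold Gm
      ring
    rw [heq]
    linarith
  -- key log inequalities
  have h1a : (0:ℝ) < 1 - a := by linarith
  have h2ay : (0:ℝ) < 2 - a - y1 := by linarith [hy1I.2]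
  have hlogeq : Real.log (2 - 2 * a) = Real.log 2 + Real.log (1 - a) := by
    rw [show (2:ℝ) - 2 * a = 2 * (1 - a) by ring]
    exact Real.log_mul two_ne_zero h1a.ne'
  have hloglt : Real.log (1 - a) < Real.log (2 - a - y1) :=
    Real.log_lt_log h1a (by linarith [hy1I.2])
  have hKL : (Real.log 2)⁻¹ * Real.log 2 = 1 := inv_mul_cancel₀ log2_pos.ne'
  have hmul : (Real.log 2)⁻¹ * Real.log (1 - a) < (Real.log 2)⁻¹ * Real.log (2 - a - y1) :=
    (mul_lt_mul_iff_right₀ hKpos).2 hloglt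
  have f1 : (Real.log 2)⁻¹ * Real.log (2 - 2 * a)
      = (Real.log 2)⁻¹ * Real.log 2 + (Real.log 2)⁻¹ * Real.log (1 - a) := by
    rw [hlogeq]; ring
  have hGmge' : h 0 ≥ (Real.log 2)⁻¹ * (-Real.log (2 - 2 * a)) := by
    rw [h0val, ← hGma]; exact hGmge
  nlinarith [hstep, h1le, hGmge', f1, hKL, hmul]

/-- Room at the bottom: `Gm` tends to `-∞` at `-1⁺`. -/
lemma exists_low {a : ℝ} (c : ℝ) (ha1 : -1 < a) (ha : a ≤ 1) (M : ℝ) :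
    ∃ u ∈ Ioo (-1:ℝ) 1, Gm a c u < M := by
  have hfac1 : Tendsto (fun y : ℝ => expNegInvGlue (a - y)) (𝓝[>] (-1:ℝ))
      (𝓝 (expNegInvGlue (a + 1))) := by
    have hc : Continuous fun y : ℝ => expNegInvGlue (a - y) :=
      (expNegInvGlue.contDiff (n := ⊤)).continuous.comp
        (by continuity : Continuous fun y : ℝ => a - y)
    exact (hc.tendsto' (-1) _ (by norm_num)).mono_left nhdsWithin_le_nhds
  have hEpos : 0 < expNegInvGlue (a + 1) := expNegInvGlue.pos_of_pos (by linarith)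
  have hfac2 : Tendsto (fun y : ℝ => (1 + y)⁻¹) (𝓝[>] (-1:ℝ)) atTop := by
    have h1 : Tendsto (fun y : ℝ => 1 + y) (𝓝[>] (-1:ℝ)) (𝓝[>] (0:ℝ)) := by
      apply tendsto_nhdsWithin_of_tendsto_nhds_of_eventually_within
      · have hcont : Continuous (fun y : ℝ => 1 + y) := by continuity
        exact (hcont.tendsto' (-1) 0 (by norm_num)).mono_left nhdsWithin_le_nhds
      · filter_upwards [self_mem_nhdsWithin] with y hy
        simp only [mem_Ioi] at hy ⊢
        linarith
    exact tendsto_inv_nhdsGT_zero.comp h1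
  have hprod : Tendsto (fun y : ℝ => expNegInvGlue (a - y) * (1 + y)⁻¹)
      (𝓝[>] (-1:ℝ)) atTop := hfac1.pos_mul_atTop hEpos hfac2
  have hT1 : Tendsto (fun y : ℝ => (Real.log 2)⁻¹ * (-Real.log (2 - a - y)) + c * (1 - y)⁻¹)
      (𝓝[>] (-1:ℝ))
      (𝓝 ((Real.log 2)⁻¹ * (-Real.log (2 - a - (-1))) + c * (1 - (-1))⁻¹)) := by
    have hc1 : ContinuousAt (fun y : ℝ => 2 - a - y) (-1:ℝ) := by fun_prop
    have hlogat : ContinuousAt Real.log ((fun y : ℝ => 2 - a - y) (-1:ℝ)) := by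
      apply Real.continuousAt_log
      simp only
      intro h
      linarith
    have hc2 : ContinuousAt (fun y : ℝ => Real.log (2 - a - y)) (-1:ℝ) := hlogat.comp hc1
    have hc3 : ContinuousAt (fun y : ℝ => (1 - y)⁻¹) (-1:ℝ) := by
      have h : ContinuousAt (fun y : ℝ => 1 - y) (-1:ℝ) := by fun_prop
      exact h.inv₀ (by norm_num)
    have hcont : ContinuousAt (fun y : ℝ =>
        (Real.log 2)⁻¹ * (-Real.log (2 - a - y)) + c * (1 - y)⁻¹) (-1:ℝ) :=
      (continuousAt_const.mul hc2.neg).add (continuousAt_const.mul hc3)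
    exact hcont.tendsto.mono_left nhdsWithin_le_nhds
  have hT : Tendsto (fun y : ℝ => Gm a c y) (𝓝[>] (-1:ℝ)) atBot := by
    have hneg : Tendsto (fun y : ℝ => -(expNegInvGlue (a - y) * (1 + y)⁻¹))
        (𝓝[>] (-1:ℝ)) atBot := tendsto_neg_atTop_atBot.comp hprod
    have := hT1.add_atBot hneg
    apply this.congr
    intro y
    unfold Gm
    ring
  have hev1 : ∀ᶠ y in 𝓝[>] (-1:ℝ), Gm a c y < M := hT.eventually (eventually_lt_atBot M)
  have hev2 : ∀ᶠ y in 𝓝[>] (-1:ℝ), y ∈ Ioo (-1:ℝ) 1 := by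
    have h1 : ∀ᶠ y in 𝓝[>] (-1:ℝ), y ∈ Ioi (-1:ℝ) := self_mem_nhdsWithin
    have h2 : ∀ᶠ y in 𝓝[>] (-1:ℝ), y < 1 :=
      eventually_nhdsWithin_of_eventually_nhds (eventually_lt_nhds (by norm_num))
    filter_upwards [h1, h2] with y hy1 hy2
    exact ⟨hy1, hy2⟩
  obtain ⟨u, hu1, hu2⟩ := (hev2.and hev1).exists
  exact ⟨u, hu1, hu2⟩

/-- Uniform lower bound for `Gm` on `(0,1)`, away from the `c`-term. -/
lemma Gm_lower {a c : ℝ} (ha : a ≤ 1) (hc : 0 ≤ c) {w : ℝ} (hw : w ∈ Ioo (0:ℝ) 1) :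
    Gm a c w ≥ -3 + (Real.log 2)⁻¹ * (-Real.log (2 - a - w)) + c * (1 - w)⁻¹ := by
  have hE := expNegInvGlue.nonneg (a - w)
  have hEle := E_le_one (a - w)
  have h1pw : (1:ℝ) ≤ 1 + w := by linarith [hw.1]
  have hinvle : (1 + w)⁻¹ ≤ 1 := by
    rw [inv_le_one_iff₀]
    right; linarith
  have hterm2 : expNegInvGlue (a - w) * (1 + w)⁻¹ ≤ 1 := by
    have h0 : (0:ℝ) ≤ (1 + w)⁻¹ := inv_nonneg.2 (by linarith)
    calc expNegInvGlue (a - w) * (1 + w)⁻¹ ≤ 1 * (1 + w)⁻¹ :=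
          mul_le_mul_of_nonneg_right hEle h0
      _ ≤ 1 := by rwa [one_mul]
  unfold Gm
  linarith

/-- Room at the top when `c > 0`. -/
lemma exists_high_pos {a c : ℝ} (ha1 : -1 < a) (ha : a ≤ 1) (hc : 0 < c) (M : ℝ) :
    ∃ w ∈ Ioo (-1:ℝ) 1, M < Gm a c w := by
  have hlog3 : (Real.log 2)⁻¹ * Real.log 3 ≤ 2 := by
    rw [inv_mul_le_iff₀ log2_pos]
    have h4 : Real.log 3 ≤ Real.log 4 := Real.log_le_log (by norm_num) (by norm_num)
    have : Real.log 4 = 2 * Real.log 2 := by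
      rw [show (4:ℝ) = 2 ^ 2 by norm_num, Real.log_pow]
      push_cast
      ring
    linarith
  have hbound : ∀ w ∈ Ioo (0:ℝ) 1, Gm a c w ≥ -5 + c * (1 - w)⁻¹ := by
    intro w hw
    have h2aw : 0 < 2 - a - w := by linarith [hw.2]
    have h2aw3 : 2 - a - w ≤ 3 := by linarith [hw.1]
    have hlogle : Real.log (2 - a - w) ≤ Real.log 3 := Real.log_le_log h2aw h2aw3
    have ht1 : (Real.log 2)⁻¹ * (-Real.log (2 - a - w)) ≥ -2 := by
      have := mul_le_mul_of_nonneg_left hlogle (inv_nonneg.2 log2_pos.le)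
      nlinarith
    have := Gm_lower ha hc.le hw
    linarith
  have hc_t : Tendsto (fun w : ℝ => c * (1 - w)⁻¹) (𝓝[<] (1:ℝ)) atTop := by
    have h1 : Tendsto (fun w : ℝ => 1 - w) (𝓝[<] (1:ℝ)) (𝓝[>] (0:ℝ)) := by
      apply tendsto_nhdsWithin_of_tendsto_nhds_of_eventually_within
      · have hcont : Continuous (fun w : ℝ => 1 - w) := by continuity
        exact (hcont.tendsto' 1 0 (by norm_num)).mono_left nhdsWithin_le_nhds
      · filter_upwards [self_mem_nhdsWithin] with w hw
        simp only [mem_Iio] at hw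
        simp only [mem_Ioi]
        linarith
    exact (tendsto_inv_nhdsGT_zero.comp h1).const_mul_atTop hc
  have hev1 : ∀ᶠ w in 𝓝[<] (1:ℝ), M + 5 < c * (1 - w)⁻¹ :=
    hc_t.eventually (eventually_gt_atTop (M + 5))
  have hev2 : ∀ᶠ w in 𝓝[<] (1:ℝ), w ∈ Ioo (0:ℝ) 1 := by
    have h1 : ∀ᶠ w in 𝓝[<] (1:ℝ), w ∈ Iio (1:ℝ) := self_mem_nhdsWithin
    have h2 : ∀ᶠ w in 𝓝[<] (1:ℝ), (0:ℝ) < w :=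
      eventually_nhdsWithin_of_eventually_nhds (eventually_gt_nhds (by norm_num))
    filter_upwards [h1, h2] with w hw1 hw2
    exact ⟨hw2, hw1⟩
  obtain ⟨w, hwI, hwv⟩ := (hev2.and hev1).exists
  refine ⟨w, ⟨by linarith [hwI.1], hwI.2⟩, ?_⟩
  have := hbound w hwI
  linarith

/-- Room at the top when `c = 0` and `x < a`. -/
lemma exists_high_zero {a x : ℝ} (ha1 : -1 < a) (ha : a ≤ 1) (hx : x ∈ Ioo (-1:ℝ) 1)
    (hxa : x < a) :
    ∃ w ∈ Ioo (-1:ℝ) 1, Gm a 0 x + 1 < Gm a 0 w := by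
  rcases eq_or_lt_of_le ha with rfl | ha2
  · -- a = 1 : Gm tends to +∞ at 1⁻
    have hT : Tendsto (fun w : ℝ => (Real.log 2)⁻¹ * (-Real.log (1 - w)))
        (𝓝[<] (1:ℝ)) atTop := by
      have h1 : Tendsto (fun w : ℝ => 1 - w) (𝓝[<] (1:ℝ)) (𝓝[>] (0:ℝ)) := by
        apply tendsto_nhdsWithin_of_tendsto_nhds_of_eventually_within
        · have hcont : Continuous (fun w : ℝ => 1 - w) := by continuity
          exact (hcont.tendsto' 1 0 (by norm_num)).mono_left nhdsWithin_le_nhds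
        · filter_upwards [self_mem_nhdsWithin] with w hw
          simp only [mem_Iio] at hw
          simp only [mem_Ioi]
          linarith
      have h2 : Tendsto (fun w : ℝ => -Real.log (1 - w)) (𝓝[<] (1:ℝ)) atTop := by
        have := Real.tendsto_log_nhdsGT_zero.comp h1
        exact (tendsto_neg_atBot_atTop).comp this
      exact Tendsto.const_mul_atTop (inv_pos.2 log2_pos) h2
    have hev1 : ∀ᶠ w in 𝓝[<] (1:ℝ), Gm 1 0 x + 4 < (Real.log 2)⁻¹ * (-Real.log (1 - w)) :=
      hT.eventually (eventually_gt_atTop _)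
    have hev2 : ∀ᶠ w in 𝓝[<] (1:ℝ), w ∈ Ioo (0:ℝ) 1 := by
      have h1 : ∀ᶠ w in 𝓝[<] (1:ℝ), w ∈ Iio (1:ℝ) := self_mem_nhdsWithin
      have h2 : ∀ᶠ w in 𝓝[<] (1:ℝ), (0:ℝ) < w :=
        eventually_nhdsWithin_of_eventually_nhds (eventually_gt_nhds (by norm_num))
      filter_upwards [h1, h2] with w hw1 hw2
      exact ⟨hw2, hw1⟩
    obtain ⟨w, hwI, hwv⟩ := (hev2.and hev1).exists
    refine ⟨w, ⟨by linarith [hwI.1], hwI.2⟩, ?_⟩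
    have hlow := Gm_lower (a := 1) (c := 0) le_rfl le_rfl hwI
    have heq : (2:ℝ) - 1 - w = 1 - w := by ring
    rw [heq] at hlow
    simp only [zero_mul, add_zero] at hlow
    linarith
  · -- a < 1 : Gm a 0 is continuous at 1 with value L', and Gm a 0 x + 1 < L'
    have h1a : (0:ℝ) < 1 - a := by linarith
    set L := (Real.log 2)⁻¹ * (-Real.log (1 - a)) with hL
    have hgap : Gm a 0 x + 1 < L := by
      have h2ax : 2 - a - x > 2 - 2 * a := by linarith
      have h22a : (0:ℝ) < 2 - 2 * a := by linarith
      have hloglt : Real.log (2 - 2 * a) < Real.log (2 - a - x) :=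
        Real.log_lt_log h22a h2ax
      have hlogeq : Real.log (2 - 2 * a) = Real.log 2 + Real.log (1 - a) := by
        rw [show (2:ℝ) - 2 * a = 2 * (1 - a) by ring]
        exact Real.log_mul two_ne_zero h1a.ne'
      have hKpos : 0 < (Real.log 2)⁻¹ := inv_pos.2 log2_pos
      have hKL : (Real.log 2)⁻¹ * Real.log 2 = 1 := inv_mul_cancel₀ log2_pos.ne'
      have hterm2 : 0 ≤ expNegInvGlue (a - x) * (1 + x)⁻¹ := by
        have := expNegInvGlue.nonneg (a - x)
        have : (0:ℝ) ≤ (1 + x)⁻¹ := inv_nonneg.2 (by linarith [hx.1])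
        positivity
      have hGmx : Gm a 0 x ≤ (Real.log 2)⁻¹ * (-Real.log (2 - a - x)) := by
        unfold Gm
        simp only [zero_mul, add_zero]
        linarith
      have hmul : (Real.log 2)⁻¹ * Real.log (2 - 2 * a)
          < (Real.log 2)⁻¹ * Real.log (2 - a - x) := (mul_lt_mul_iff_right₀ hKpos).2 hloglt
      have hrw : (Real.log 2)⁻¹ * Real.log (2 - 2 * a)
          = 1 + (Real.log 2)⁻¹ * Real.log (1 - a) := by
        rw [hlogeq, mul_add, hKL]
      nlinarith
    have hcontGm : ContinuousAt (fun w => Gm a 0 w) 1 := by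
      unfold Gm
      simp only [zero_mul, add_zero]
      have hc1 : ContinuousAt (fun w : ℝ => 2 - a - w) (1:ℝ) := by fun_prop
      have hlogat : ContinuousAt Real.log ((fun w : ℝ => 2 - a - w) (1:ℝ)) := by
        apply Real.continuousAt_log
        simp only
        intro h
        linarith
      have hc2 : ContinuousAt (fun w : ℝ => Real.log (2 - a - w)) (1:ℝ) := hlogat.comp hc1
      have hcE : ContinuousAt (fun w : ℝ => expNegInvGlue (a - w)) (1:ℝ) :=
        ((expNegInvGlue.contDiff (n := ⊤)).continuous.comp
          (by continuity : Continuous fun w : ℝ => a - w)).continuousAt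
      have hc3 : ContinuousAt (fun w : ℝ => (1 + w)⁻¹) (1:ℝ) := by
        have h : ContinuousAt (fun w : ℝ => 1 + w) (1:ℝ) := by fun_prop
        exact h.inv₀ (by norm_num)
      exact (continuousAt_const.mul hc2.neg).sub (hcE.mul hc3)
    have hval : Gm a 0 1 = L := by
      unfold Gm
      have hE0 : expNegInvGlue (a - 1) = 0 := expNegInvGlue.zero_of_nonpos (by linarith)
      rw [hE0]
      have heq : (2:ℝ) - a - 1 = 1 - a := by ring
      rw [heq]
      ring
    have hT : Tendsto (fun w => Gm a 0 w) (𝓝[<] (1:ℝ)) (𝓝 L) := by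
      rw [← hval]
      exact hcontGm.tendsto.mono_left nhdsWithin_le_nhds
    have hev1 : ∀ᶠ w in 𝓝[<] (1:ℝ), Gm a 0 x + 1 < Gm a 0 w :=
      hT.eventually (eventually_gt_nhds hgap)
    have hev2 : ∀ᶠ w in 𝓝[<] (1:ℝ), w ∈ Ioo (-1:ℝ) 1 := by
      have h1 : ∀ᶠ w in 𝓝[<] (1:ℝ), w ∈ Iio (1:ℝ) := self_mem_nhdsWithin
      have h2 : ∀ᶠ w in 𝓝[<] (1:ℝ), (-1:ℝ) < w :=
        eventually_nhdsWithin_of_eventually_nhds (eventually_gt_nhds (by norm_num))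
      filter_upwards [h1, h2] with w hw1 hw2
      exact ⟨hw2, hw1⟩
    obtain ⟨w, hwI, hwv⟩ := (hev2.and hev1).exists
    exact ⟨w, hwI, hwv⟩

lemma exists_lt_self {a : ℝ} (c : ℝ) (ha : a ≤ 1) (hc : 0 ≤ c) {x : ℝ}
    (hx : x ∈ Ioo (-1:ℝ) 1) :
    ∃ u ∈ Ioo (-1:ℝ) 1, Gm a c u < Gm a c x + 0 := by
  have hmem : (x - 1) / 2 ∈ Ioo (-1:ℝ) 1 := by
    constructor
    · linarith [hx.1]
    · linarith [hx.2]
  refine ⟨(x - 1) / 2, hmem, ?_⟩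
  rw [add_zero]
  have := Gm_strictMonoOn c ha hc hmem hx (by linarith [hx.1])
  simpa using this

lemma exists_gt_self {a : ℝ} (c : ℝ) (ha : a ≤ 1) (hc : 0 ≤ c) {x : ℝ}
    (hx : x ∈ Ioo (-1:ℝ) 1) :
    ∃ w ∈ Ioo (-1:ℝ) 1, Gm a c x + 0 < Gm a c w := by
  have hmem : (x + 1) / 2 ∈ Ioo (-1:ℝ) 1 := by
    constructor
    · linarith [hx.1]
    · linarith [hx.2]
  refine ⟨(x + 1) / 2, hmem, ?_⟩
  rw [add_zero]
  have := Gm_strictMonoOn c ha hc hx hmem (by linarith [hx.2])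
  simpa using this

end NullFieldAux

open NullFieldAux

/-- Let `B` be a smooth manifold, `C ⊆ B` closed, and `l : B → ℝ` smooth with values in
`(-1, 1]`.  Then there is a smooth `v : B × (-1,1) → [0,∞)` such that, for the
parametrized ODE `γ' = v(p, γ)` valued in `(-1,1)`:
(i) the forward escape time satisfies `T(p,x) ≤ 1` (no solution on `[0,1]`) iff
`p ∈ C` and `l(p) ≤ x < 1`; and
(ii) the backward escape time is `-∞` everywhere (solutions exist on `[-T,0]` for
every `T > 0`). -/
theorem exists_null_field_excising_epigraph
    {E : Type*} [NormedAddCommGroup E] [NormedSpace ℝ E] [FiniteDimensional ℝ E]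
    {H : Type*} [TopologicalSpace H] (I : ModelWithCorners ℝ E H) [I.Boundaryless]
    {B : Type*} [TopologicalSpace B] [ChartedSpace H B]
    [IsManifold I ((⊤ : ℕ∞) : WithTop ℕ∞) B] [T2Space B] [SecondCountableTopology B]
    (C : Set B) (hC : IsClosed C)
    (l : B → ℝ) (hl : ContMDiff I 𝓘(ℝ, ℝ) (⊤ : ℕ∞) l)
    (hl_range : ∀ p, l p ∈ Ioc (-1 : ℝ) 1) :
    ∃ v : B × ℝ → ℝ,
      ContMDiffOn (I.prod 𝓘(ℝ, ℝ)) 𝓘(ℝ, ℝ) (⊤ : ℕ∞) v (univ ×ˢ Ioo (-1 : ℝ) 1) ∧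
      (∀ p : B, ∀ x ∈ Ioo (-1 : ℝ) 1, 0 ≤ v (p, x)) ∧
      -- (i) T(p,x) ≤ 1 ↔ (p ∈ C ∧ l p ≤ x < 1)
      (∀ p : B, ∀ x ∈ Ioo (-1 : ℝ) 1,
        ((∃ γ : ℝ → ℝ, γ 0 = x ∧
            ∀ t ∈ Icc (0:ℝ) 1, γ t ∈ Ioo (-1 : ℝ) 1 ∧ HasDerivAt γ (v (p, γ t)) t)
          ↔ ¬ (p ∈ C ∧ l p ≤ x))) ∧
      -- (ii) S(p,x) = -∞
      (∀ p : B, ∀ x ∈ Ioo (-1 : ℝ) 1, ∀ T : ℝ, 0 < T →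
        ∃ γ : ℝ → ℝ, γ 0 = x ∧
          ∀ t ∈ Icc (-T) 0, γ t ∈ Ioo (-1 : ℝ) 1 ∧ HasDerivAt γ (v (p, γ t)) t) := by
  -- a smooth function vanishing exactly on C
  haveI : LocallyCompactSpace B := Manifold.locallyCompact_of_finiteDimensional (M := B) I
  obtain ⟨fb, hf_smooth, hf_range, hf_zero, -⟩ :=
    exists_contMDiff_zero_iff_one_iff_of_isClosed (n := (⊤ : ℕ∞)) I hC isClosed_empty (disjoint_empty C)
  have hf_nonneg : ∀ p, 0 ≤ fb p := fun p => (hf_range (mem_range_self p)).1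
  have hl1 : ∀ p, l p ≤ 1 := fun p => (hl_range p).2
  have hl1' : ∀ p, -1 < l p := fun p => (hl_range p).1
  refine ⟨fun q => (Gd (l q.1) (fb q.1) q.2)⁻¹, ?_, ?_, ?_, ?_⟩
  · -- smoothness
    intro q hq
    apply ContMDiffAt.contMDiffWithinAt
    obtain ⟨-, hq2⟩ := hq
    simp only [mem_Ioo] at hq2
    have hF : ContMDiffAt (I.prod 𝓘(ℝ, ℝ)) 𝓘(ℝ, ℝ × ℝ × ℝ) (⊤ : ℕ∞)
        (fun q : B × ℝ => (l q.1, fb q.1, q.2)) q := by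
      apply ContMDiffAt.prodMk_space
      · exact (hl.comp contMDiff_fst).contMDiffAt
      · apply ContMDiffAt.prodMk_space
        · exact (hf_smooth.comp contMDiff_fst).contMDiffAt
        · exact contMDiff_snd.contMDiffAt
    have hW : ContDiffAt ℝ ((⊤ : ℕ∞) : WithTop ℕ∞) (fun z : ℝ × ℝ × ℝ => (Gd z.1 z.2.1 z.2.2)⁻¹)
        (l q.1, fb q.1, q.2) := by
      set z₀ : ℝ × ℝ × ℝ := (l q.1, fb q.1, q.2) with hz₀
      have hp1 : ContDiffAt ℝ ((⊤ : ℕ∞) : WithTop ℕ∞) (fun z : ℝ × ℝ × ℝ => z.1) z₀ := contDiffAt_fst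
      have hp2 : ContDiffAt ℝ ((⊤ : ℕ∞) : WithTop ℕ∞) (fun z : ℝ × ℝ × ℝ => z.2.1) z₀ :=
        contDiffAt_fst.comp z₀ contDiffAt_snd
      have hp3 : ContDiffAt ℝ ((⊤ : ℕ∞) : WithTop ℕ∞) (fun z : ℝ × ℝ × ℝ => z.2.2) z₀ :=
        contDiffAt_snd.comp z₀ contDiffAt_snd
      have hd1 : (2 : ℝ) - z₀.1 - z₀.2.2 ≠ 0 := by
        have := hl1 q.1
        simp only [hz₀]
        nlinarith [hq2.2]
      have hd2 : (1 : ℝ) + z₀.2.2 ≠ 0 := by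
        simp only [hz₀]
        nlinarith [hq2.1]
      have hd3 : (1 : ℝ) - z₀.2.2 ≠ 0 := by
        simp only [hz₀]
        nlinarith [hq2.2]
      have hGdpos : 0 < Gd z₀.1 z₀.2.1 z₀.2.2 :=
        Gd_pos (hl1 q.1) (hf_nonneg q.1) (by simpa using hq2)
      have hbody : ContDiffAt ℝ ((⊤ : ℕ∞) : WithTop ℕ∞)
          (fun z : ℝ × ℝ × ℝ => Gd z.1 z.2.1 z.2.2) z₀ := by
        unfold Gd
        apply ContDiffAt.add
        apply ContDiffAt.add
        · exact contDiffAt_const.mul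
            (((contDiffAt_const.sub hp1).sub hp3).inv hd1)
        · apply ContDiffAt.add
          · exact ((contDiff_Ed.contDiffAt).comp z₀ (hp1.sub hp3)).mul
              ((contDiffAt_const.add hp3).inv hd2)
          · exact (((expNegInvGlue.contDiff (n := ⊤)).contDiffAt).comp z₀ (hp1.sub hp3)).mul
              (((contDiffAt_const.add hp3).pow 2).inv (pow_ne_zero 2 hd2))
        · exact hp2.mul (((contDiffAt_const.sub hp3).pow 2).inv (pow_ne_zero 2 hd3))
      exact hbody.inv hGdpos.ne'
    have hcomp := ContDiffAt.comp_contMDiffAt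
      (f := fun q : B × ℝ => (l q.1, fb q.1, q.2)) hW hF
    exact hcomp
  · -- nonnegativity
    intro p x hx
    exact inv_nonneg.2 (Gd_pos (hl1 p) (hf_nonneg p) hx).le
  · -- the iff
    intro p x hx
    constructor
    · rintro ⟨γ, hγ0, hγ⟩ ⟨hpC, hlx⟩
      have hfp : fb p = 0 := (hf_zero p).1 hpC
      apply no_solution (hl1' p) hlx hx hγ0
      intro t ht
      have := hγ t ht
      simpa [hfp] using this
    · intro hn
      by_cases hfp : fb p = 0
      · have hpC : p ∈ C := (hf_zero p).2 hfp
        have hxl : x < l p := by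
          by_contra h
          push_neg at h
          exact hn ⟨hpC, h⟩
        obtain ⟨w, hwI, hwv⟩ := exists_high_zero (hl1' p) (hl1 p) hx hxl
        have hu := exists_lt_self (a := l p) (fb p) (hl1 p) (hf_nonneg p) hx
        have hw : ∃ w ∈ Ioo (-1:ℝ) 1, Gm (l p) (fb p) x + 1 < Gm (l p) (fb p) w := by
          refine ⟨w, hwI, ?_⟩
          rw [hfp]
          exact hwv
        obtain ⟨γ, hγ0, hγ⟩ := flow_exists (fb p) (hl1 p) (hf_nonneg p) hx le_rfl
          zero_le_one hu hw
        exact ⟨γ, hγ0, fun t ht => hγ t ht⟩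
      · have hfp_pos : 0 < fb p := lt_of_le_of_ne (hf_nonneg p) (Ne.symm hfp)
        obtain ⟨w, hwI, hwv⟩ := exists_high_pos (hl1' p) (hl1 p) hfp_pos
          (Gm (l p) (fb p) x + 1)
        have hu := exists_lt_self (a := l p) (fb p) (hl1 p) (hf_nonneg p) hx
        obtain ⟨γ, hγ0, hγ⟩ := flow_exists (fb p) (hl1 p) (hf_nonneg p) hx le_rfl
          zero_le_one hu ⟨w, hwI, hwv⟩
        exact ⟨γ, hγ0, fun t ht => hγ t ht⟩
  · -- backward solutions
    intro p x hx T hT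
    have hu := exists_low (fb p) (hl1' p) (hl1 p) (Gm (l p) (fb p) x + -T)
    have hw := exists_gt_self (a := l p) (fb p) (hl1 p) (hf_nonneg p) hx
    obtain ⟨γ, hγ0, hγ⟩ := flow_exists (fb p) (hl1 p) (hf_nonneg p) hx
      (by linarith : -T ≤ 0) le_rfl hu hw
    exact ⟨γ, hγ0, fun t ht => hγ t ht⟩
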